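/- Let B, B* be linear maps on V satisfying B³B* − [3]_q B²B*B + [3]_q BB*B² − B*B³ = 0 where [3]_q = q²+1+q^{−2} and q is not a root of unity. Suppose B is diagonalizable with eigenvalues θ_i = q^{2i−d} (0 ≤ i ≤ d) and primitive idempotents E_i. Then for each i, B* E_i V ⊆ E_{i−1}V + E_i V + E_{i+1}V (with E_{−1} = E_{d+1} = 0). -/

import Mathlib

theorem stmt16 {F V : Type*} [Field F] [IsAlgClosed F] [AddCommGroup V] [Module F V]
    [FiniteDimensional F V] [Nontrivial V]
    (q : F) (hq : q ≠ 0) (hroot : ∀ n : ℕ, 0 < n → q ^ n ≠ 1)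
    (d : ℕ) (B Bstar : Module.End F V) (E : ℕ → Module.End F V)
    (hsum : ∑ i ∈ Finset.range (d + 1), E i = 1)
    (horth : ∀ i j, i ≤ d → j ≤ d → E i * E j = if i = j then E i else 0)
    (heig : ∀ i, i ≤ d → B * E i = q ^ (2 * (i : ℤ) - d) • E i)
    (hEzero : ∀ j, d < j → E j = 0)
    (hSerre : B ^ 3 * Bstar - (q ^ 2 + 1 + q⁻¹ ^ 2) • (B ^ 2 * Bstar * B)
      + (q ^ 2 + 1 + q⁻¹ ^ 2) • (B * Bstar * B ^ 2) - Bstar * B ^ 3 = 0) :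
    ∀ i, i ≤ d → ∀ v : V,
      Bstar (E i v) ∈
        LinearMap.range (E (i - 1)) ⊔ LinearMap.range (E i) ⊔ LinearMap.range (E (i + 1)) := by
  -- q^m = 1 (integer power) implies m = 0
  have hone : ∀ m : ℤ, q ^ m = 1 → m = 0 := by
    intro m hm
    rcases lt_trichotomy m 0 with h | h | h
    · exfalso
      have h1 : q ^ (-m) = 1 := by rw [zpow_neg, hm, inv_one]
      have hn : q ^ ((-m).toNat) = 1 := by
        rw [← zpow_natCast, Int.toNat_of_nonneg (by omega)]; exact h1
      exact hroot _ (by omega) hn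
    · exact h
    · exfalso
      have hn : q ^ (m.toNat) = 1 := by
        rw [← zpow_natCast, Int.toNat_of_nonneg (by omega)]; exact hm
      exact hroot _ (by omega) hn
  have hinj : ∀ A C : ℤ, q ^ A = q ^ C → A = C := by
    intro A C h
    have h1 : q ^ (A - C) = 1 := by
      rw [zpow_sub₀ hq, h, div_self (zpow_ne_zero _ hq)]
    have := hone _ h1; omega
  -- E j * B = θ j • E j
  have hEB : ∀ j, j ≤ d → E j * B = q ^ (2 * (j : ℤ) - d) • E j := by
    intro j hj
    have step : ∀ i ∈ Finset.range (d + 1),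
        E j * (B * E i) = if i = j then q ^ (2 * (j : ℤ) - d) • E j else 0 := by
      intro i hi
      rw [Finset.mem_range] at hi
      rw [heig i (by omega), mul_smul_comm, horth j i hj (by omega)]
      by_cases h : j = i
      · subst h; simp
      · simp [h, Ne.symm h]
    calc E j * B = E j * B * 1 := (mul_one _).symm
      _ = ∑ i ∈ Finset.range (d + 1), E j * (B * E i) := by
          rw [← hsum, Finset.mul_sum]
          exact Finset.sum_congr rfl fun i _ => (mul_assoc _ _ _)
      _ = q ^ (2 * (j : ℤ) - d) • E j := by
          rw [Finset.sum_congr rfl step]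
          simp [Finset.sum_ite_eq, Finset.mem_range, Nat.lt_succ_iff, hj]
  -- key vanishing lemma
  have key : ∀ i j, i ≤ d → j ≤ d → (j : ℤ) ≠ i → (j : ℤ) ≠ i + 1 → (j : ℤ) ≠ (i : ℤ) - 1 →
      E j * Bstar * E i = 0 := by
    intro i j hi hj h1 h2 h3
    set a : F := q ^ (2 * (i : ℤ) - d) with ha
    set x : F := q ^ (2 * (j : ℤ) - d) with hx
    have hBEi : B * E i = a • E i := heig i hi
    have hEBj : E j * B = x • E j := hEB j hj
    have hB3 : B ^ 3 = B * B * B := by rw [pow_succ, pow_succ, pow_one]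
    have hB2 : B ^ 2 = B * B := sq B
    have hB2Ei : B ^ 2 * E i = (a * a) • E i := by
      rw [hB2]
      simp only [mul_assoc, hBEi, mul_smul_comm, smul_smul]
      try module
    have hB3Ei : B ^ 3 * E i = (a * (a * a)) • E i := by
      rw [hB3]
      simp only [mul_assoc, hBEi, mul_smul_comm, smul_smul]
      try module
    have hEjB2 : E j * B ^ 2 = (x * x) • E j := by
      rw [hB2]
      simp only [← mul_assoc, hEBj, smul_mul_assoc, smul_smul]
      try module
    have hEjB3 : E j * B ^ 3 = (x * x * x) • E j := by
      rw [hB3]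
      simp only [← mul_assoc, hEBj, smul_mul_assoc, smul_smul]
      try module
    have e1 : E j * (B ^ 3 * Bstar) * E i = (x * x * x) • (E j * Bstar * E i) := by
      rw [← mul_assoc, hEjB3]
      simp only [smul_mul_assoc]
      try module
    have e2 : E j * (B ^ 2 * Bstar * B) * E i
        = (x * x * a) • (E j * Bstar * E i) := by
      rw [show E j * (B ^ 2 * Bstar * B) * E i = (E j * B ^ 2) * Bstar * (B * E i) by
        simp only [mul_assoc], hEjB2, hBEi]
      simp only [smul_mul_assoc, mul_smul_comm, smul_smul, mul_assoc]
      try module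
    have e3 : E j * (B * Bstar * B ^ 2) * E i
        = (x * (a * a)) • (E j * Bstar * E i) := by
      rw [show E j * (B * Bstar * B ^ 2) * E i = (E j * B) * Bstar * (B ^ 2 * E i) by
        simp only [mul_assoc], hEBj, hB2Ei]
      simp only [smul_mul_assoc, mul_smul_comm, smul_smul, mul_assoc]
      try module
    have e4 : E j * (Bstar * B ^ 3) * E i = (a * (a * a)) • (E j * Bstar * E i) := by
      rw [show E j * (Bstar * B ^ 3) * E i = (E j * Bstar) * (B ^ 3 * E i) by
        simp only [mul_assoc], hB3Ei]
      simp only [smul_mul_assoc, mul_smul_comm, smul_smul, mul_assoc]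
      try module
    have e0 : E j * (B ^ 3 * Bstar - (q ^ 2 + 1 + q⁻¹ ^ 2) • (B ^ 2 * Bstar * B)
        + (q ^ 2 + 1 + q⁻¹ ^ 2) • (B * Bstar * B ^ 2) - Bstar * B ^ 3) * E i = 0 := by
      rw [hSerre]; simp
    rw [mul_sub, mul_add, mul_sub, sub_mul, add_mul, sub_mul, mul_smul_comm, mul_smul_comm,
      smul_mul_assoc, smul_mul_assoc, e1, e2, e3, e4] at e0
    set c : F := q ^ 2 + 1 + q⁻¹ ^ 2 with hc
    have hcomb : (x * x * x - c * (x * x * a) + c * (x * (a * a)) - a * (a * a))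
        • (E j * Bstar * E i) = 0 := by
      rw [← e0]; module
    have hq2 : (q : F) ^ 2 * a = q ^ (2 * ((i : ℤ) + 1) - d) := by
      rw [ha, ← zpow_natCast q 2, ← zpow_add₀ hq]
      congr 1; push_cast; ring
    have hqm2 : (q⁻¹ : F) ^ 2 * a = q ^ (2 * ((i : ℤ) - 1) - d) := by
      rw [ha, inv_pow, ← zpow_natCast q 2, ← zpow_neg, ← zpow_add₀ hq]
      congr 1; push_cast; ring
    have f1 : x - a ≠ 0 := by
      rw [sub_ne_zero, hx, ha]
      intro h; have := hinj _ _ h; omega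
    have f2 : x - q ^ 2 * a ≠ 0 := by
      rw [sub_ne_zero, hq2, hx]
      intro h; have := hinj _ _ h; omega
    have f3 : x - q⁻¹ ^ 2 * a ≠ 0 := by
      rw [sub_ne_zero, hqm2, hx]
      intro h; have := hinj _ _ h; omega
    have hscal : x * x * x - c * (x * x * a) + c * (x * (a * a)) - a * (a * a)
        = (x - a) * (x - q ^ 2 * a) * (x - q⁻¹ ^ 2 * a) := by
      rw [hc]; field_simp; ring
    have hne : x * x * x - c * (x * x * a) + c * (x * (a * a)) - a * (a * a) ≠ 0 := by
      rw [hscal]; exact mul_ne_zero (mul_ne_zero f1 f2) f3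
    rcases smul_eq_zero.mp hcomb with h | h
    · exact absurd h hne
    · exact h
  -- assemble
  intro i hi v
  have hv : Bstar (E i v) = ∑ j ∈ Finset.range (d + 1), (E j * Bstar * E i) v := by
    have h1 : (∑ j ∈ Finset.range (d + 1), E j) (Bstar (E i v)) = Bstar (E i v) := by
      rw [hsum]; rfl
    rw [← h1]
    simp [LinearMap.sum_apply, Module.End.mul_apply]
  rw [hv]
  apply Submodule.sum_mem
  intro j hjmem
  rw [Finset.mem_range] at hjmem
  by_cases hcase : (j : ℤ) = i ∨ (j : ℤ) = i + 1 ∨ (j : ℤ) = (i : ℤ) - 1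
  · rcases hcase with h | h | h
    · have hji : j = i := by omega
      subst hji
      exact Submodule.mem_sup_left (Submodule.mem_sup_right ⟨Bstar (E j v), rfl⟩)
    · have hji : j = i + 1 := by omega
      subst hji
      exact Submodule.mem_sup_right ⟨Bstar (E i v), rfl⟩
    · have hji : j = i - 1 := by omega
      subst hji
      exact Submodule.mem_sup_left (Submodule.mem_sup_left ⟨Bstar (E i v), rfl⟩)
  · push_neg at hcase
    rw [key i j hi (by omega) hcase.1 hcase.2.1 hcase.2.2]
    simp
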